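/- arXiv:1009.6072 — 2 statements merged into one kernel-verified Lean document; each statement's English description precedes it below -/
import Mathlib

section
/- If χ and χ' are two distinct Dirichlet characters modulo M (with values in any field), then there exists a prime number p with p < M, p not dividing M, and χ(p) ≠ χ'(p). -/
/-- If χ and χ' are two distinct Dirichlet characters modulo `M` (with values in a field `F`),
then there exists a prime `p < M` with `p ∤ M` and `χ p ≠ χ' p`. -/
theorem distinct_dirichlet_characters_differ_at_small_prime
    {F : Type*} [Field F] {M : ℕ} (hM : 0 < M)
    (χ χ' : DirichletCharacter F M) (h : χ ≠ χ') :
    ∃ p : ℕ, p.Prime ∧ p < M ∧ ¬ p ∣ M ∧ χ (p : ZMod M) ≠ χ' (p : ZMod M) := by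
  rcases eq_or_lt_of_le (show 1 ≤ M from hM) with hM1 | hM1
  · -- M = 1: characters are equal, contradiction
    exfalso
    apply h
    ext a
    haveI : Subsingleton (ZMod M) := by rw [← hM1]; infer_instance
    have : (a : ZMod M) = 1 := Subsingleton.elim _ _
    rw [this, map_one, map_one]
  by_contra hc
  push_neg at hc
  apply h
  have key : ∀ n : ℕ, n.Coprime M → χ (n : ZMod M) = χ' (n : ZMod M) := by
    intro n
    induction n using Nat.strong_induction_on with
    | _ n ih =>
      intro hn
      rcases lt_or_ge n M with hnM | hnM
      · rcases Nat.eq_zero_or_pos n with rfl | hn0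
        · simp [Nat.coprime_zero_left] at hn; omega
        rcases eq_or_lt_of_le (show 1 ≤ n from hn0) with h1 | h1
        · rw [← h1]; simp
        · -- 1 < n < M
          obtain ⟨p, hp, hpn⟩ := Nat.exists_prime_and_dvd (by omega : n ≠ 1)
          obtain ⟨m, rfl⟩ := hpn
          have hpM : ¬ p ∣ M := fun hd =>
            Nat.Prime.one_lt hp |>.ne' (Nat.eq_one_of_dvd_coprimes hn (dvd_mul_right p m) hd)
          have hpltM : p < M := lt_of_le_of_lt (Nat.le_of_dvd (by omega) ⟨m, rfl⟩) hnM
          have hm0 : m ≠ 0 := by rintro rfl; simp at h1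
          have hmlt : m < p * m :=
            (Nat.lt_mul_iff_one_lt_left (Nat.pos_of_ne_zero hm0)).2 hp.one_lt
          have hmc : m.Coprime M := Nat.Coprime.coprime_dvd_left (dvd_mul_left m p) hn
          push_cast
          rw [map_mul, map_mul, hc p hp hpltM hpM, ih m hmlt hmc]
      · -- n ≥ M: reduce mod M
        have hmod : ((n % M : ℕ) : ZMod M) = (n : ZMod M) := by
          conv_rhs => rw [← Nat.mod_add_div n M]
          push_cast
          simp
        have hlt : n % M < n := lt_of_lt_of_le (Nat.mod_lt n hM) hnM
        have hcop : (n % M).Coprime M := by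
          rw [Nat.Coprime, ← Nat.gcd_rec]
          exact Nat.coprime_comm.mp hn
        rw [← hmod, ih _ hlt hcop]
  haveI : NeZero M := ⟨hM.ne'⟩
  ext a
  have := key (a : ZMod M).val (ZMod.val_coe_unit_coprime a)
  rwa [ZMod.natCast_val, ZMod.cast_id] at this
end

section
/- For a prime p and a nonnegative integer valued sequence: if f = Σ_{n≥0} a_n q^n ∈ M_k(Γ_0(p^r N_0), χ) with r ≥ 2, gcd(p, N_0) = 1, and χ a character mod p^{r−1}N_0, then f|U(p) = Σ_{n≥0} a_{pn} q^n lies in M_k(Γ_0(p^{r−1}N_0), χ), i.e., U(p) lowers the level from p^r N_0 to p^{r−1}N_0. -/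
open scoped ModularForm Manifold MatrixGroups
open UpperHalfPlane CongruenceSubgroup

/-- `f` is a holomorphic modular form of weight `k` and level `Γ₀(N)` with nebentypus `χ`. -/
def IsModularFormWithChar (k : ℤ) (N : ℕ) (χ : DirichletCharacter ℂ N) (f : ℍ → ℂ) : Prop :=
  MDifferentiable 𝓘(ℂ) 𝓘(ℂ) f ∧
  (∀ γ : SL(2, ℤ), γ ∈ Gamma0 N → f ∣[k] γ = χ ((γ 1 1 : ℤ) : ZMod N) • f) ∧
  (∀ γ : SL(2, ℤ), IsBoundedAtImInfty (f ∣[k] γ))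

lemma aux_im_pos {p : ℕ} (hp : 0 < p) (m : ℕ) (z : UpperHalfPlane) :
    0 < ((((z : ℂ) + (m : ℂ)) / (p : ℂ))).im := by
  have hp' : (0 : ℝ) < (p : ℝ) := by exact_mod_cast hp
  have : (((z : ℂ) + (m : ℂ)) / (p : ℂ)).im = ((z : ℂ) + (m : ℂ)).im / (p : ℝ) := by
    rw [show ((p : ℂ)) = (((p : ℝ) : ℂ)) by push_cast; rfl, Complex.div_ofReal_im]
  rw [this]
  have : ((z : ℂ) + (m : ℂ)).im = (z : ℂ).im := by simp
  rw [this]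
  exact div_pos z.2 hp'

lemma SL_slash_eval (k : ℤ) (f : ℍ → ℂ) (γ : SL(2,ℤ)) (z : ℍ) :
    (f ∣[k] γ) z = f (γ • z) * (UpperHalfPlane.denom γ z)^(-k) := by
  rw [ModularForm.SL_slash_apply]

lemma coe_smul_eq (γ : SL(2,ℤ)) (z : ℍ) :
    (↑(γ • z) : ℂ) = ((γ 0 0 : ℂ) * z + γ 0 1) / ((γ 1 0 : ℂ) * z + γ 1 1) := by
  rw [UpperHalfPlane.coe_specialLinearGroup_apply]
  simp

lemma denom_eq (γ : SL(2,ℤ)) (z : ℍ) :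
    UpperHalfPlane.denom γ z = (γ 1 0 : ℂ) * z + γ 1 1 := ModularGroup.denom_apply γ z

/-- Build an element of `SL(2,ℤ)` from four integers. -/
def mkSL (a b c d : ℤ) (h : a * d - b * c = 1) : SL(2, ℤ) :=
  ⟨!![a, b; c, d], by rw [Matrix.det_fin_two_of]; linarith⟩

@[simp] lemma mkSL_00 (a b c d : ℤ) (h) : (mkSL a b c d h) 0 0 = a := rfl
@[simp] lemma mkSL_01 (a b c d : ℤ) (h) : (mkSL a b c d h) 0 1 = b := rfl
@[simp] lemma mkSL_10 (a b c d : ℤ) (h) : (mkSL a b c d h) 1 0 = c := rfl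
@[simp] lemma mkSL_11 (a b c d : ℤ) (h) : (mkSL a b c d h) 1 1 = d := rfl

lemma transform_of_slash {k : ℤ} {N : ℕ} {χ : DirichletCharacter ℂ N} {f : ℍ → ℂ}
    (h : ∀ γ : SL(2, ℤ), γ ∈ Gamma0 N → f ∣[k] γ = χ ((γ 1 1 : ℤ) : ZMod N) • f)
    {γ : SL(2, ℤ)} (hγ : γ ∈ Gamma0 N) (w : ℍ) :
    f (γ • w) = χ ((γ 1 1 : ℤ) : ZMod N) * ((UpperHalfPlane.denom γ w) ^ k * f w) := by
  have := congrFun (h γ hγ) w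
  rw [SL_slash_eval] at this
  have hd : (UpperHalfPlane.denom γ w) ^ k ≠ 0 :=
    zpow_ne_zero _ (UpperHalfPlane.denom_ne_zero _ _)
  rw [zpow_neg, mul_inv_eq_iff_eq_mul₀ hd] at this
  rw [this]
  simp only [Pi.smul_apply, smul_eq_mul]
  ring

lemma periodic_of_slash {k : ℤ} {N : ℕ} {χ : DirichletCharacter ℂ N} {f : ℍ → ℂ}
    (h : ∀ γ : SL(2, ℤ), γ ∈ Gamma0 N → f ∣[k] γ = χ ((γ 1 1 : ℤ) : ZMod N) • f)
    (w : ℍ) (n : ℤ) (hw' : 0 < ((w : ℂ) + n).im) :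
    f (UpperHalfPlane.mk ((w : ℂ) + n) hw') = f w := by
  have hdet : (1 : ℤ) * 1 - n * 0 = 1 := by ring
  set γ : SL(2, ℤ) := mkSL 1 n 0 1 hdet with hγdef
  have hγ : γ ∈ Gamma0 N := by
    rw [Gamma0_mem]; simp [hγdef]
  have key := transform_of_slash h hγ w
  have h1 : γ • w = UpperHalfPlane.mk ((w : ℂ) + n) hw' := by
    apply UpperHalfPlane.ext
    rw [coe_smul_eq]
    simp [hγdef]
  have h2 : UpperHalfPlane.denom γ w = 1 := by
    rw [denom_eq]; simp [hγdef]
  rw [h1, h2] at key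
  simpa [hγdef] using key

lemma changeLevel_intCast {n m : ℕ} [NeZero m] (h : n ∣ m) (χ : DirichletCharacter ℂ n) (x : ℤ)
    (hx : IsUnit ((x : ZMod m))) :
    (DirichletCharacter.changeLevel h χ) ((x : ZMod m)) = χ ((x : ZMod n)) := by
  obtain ⟨u, hu⟩ := hx
  rw [← hu, DirichletCharacter.changeLevel_eq_cast_of_dvd]
  rw [hu, ZMod.cast_intCast h]

lemma sum_range_eq_sum_zmod (p : ℕ) [NeZero p] (F : ZMod p → ℂ) :
    ∑ m ∈ Finset.range p, F (m : ZMod p) = ∑ x : ZMod p, F x := by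
  refine Finset.sum_nbij' (i := fun m => (m : ZMod p)) (j := fun x => x.val)
    (fun a _ => Finset.mem_univ _) (fun x _ => Finset.mem_range.2 (ZMod.val_lt x))
    (fun a ha => ZMod.val_cast_of_lt (Finset.mem_range.1 ha))
    (fun x _ => ZMod.natCast_rightInverse x) (fun a _ => rfl)

lemma sum_affine {p : ℕ} [NeZero p] (hp : p.Prime) (e u : ZMod p) (hu : u ≠ 0) (F : ZMod p → ℂ) :
    ∑ x : ZMod p, F (e + u * x) = ∑ x : ZMod p, F x := by
  haveI := Fact.mk hp
  have hbij : Function.Bijective (fun x : ZMod p => e + u * x) :=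
    ((Equiv.mulLeft₀ u hu).trans (Equiv.addLeft e)).bijective
  exact Fintype.sum_bijective _ hbij _ _ (fun x => rfl)

lemma im_linear_div {G e D₁ : ℤ} (hG : 0 < G) (hD : 0 < D₁) (z : ℍ) :
    0 < (((G : ℂ) * z + e) / (D₁ : ℂ)).im := by
  have h2 : ((G : ℂ) * z + e).im = G * z.im := by
    rw [show ((G:ℂ)) = (((G:ℝ)):ℂ) by push_cast; rfl,
      show ((e:ℂ)) = (((e:ℝ)):ℂ) by push_cast; rfl]
    simp [Complex.add_im, Complex.re_ofReal_mul, Complex.im_ofReal_mul, UpperHalfPlane.coe_im]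
  rw [show ((D₁:ℂ)) = (((D₁:ℝ)):ℂ) by push_cast; rfl, Complex.div_ofReal_im, h2]
  apply div_pos (mul_pos (by exact_mod_cast hG) z.im_pos) (by exact_mod_cast hD)

lemma im_mk_linear {G e D₁ : ℤ} (hG : 0 < G) (hD : 0 < D₁) (z : ℍ) :
    (UpperHalfPlane.mk (((G : ℂ) * z + e) / (D₁ : ℂ)) (im_linear_div hG hD z)).im
      = ((G : ℝ) / (D₁ : ℝ)) * z.im := by
  have h2 : ((G : ℂ) * z + e).im = G * z.im := by
    rw [show ((G:ℂ)) = (((G:ℝ)):ℂ) by push_cast; rfl,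
      show ((e:ℂ)) = (((e:ℝ)):ℂ) by push_cast; rfl]
    simp [Complex.add_im, Complex.re_ofReal_mul, Complex.im_ofReal_mul, UpperHalfPlane.coe_im]
  show ((((G : ℂ) * z + e)) / (D₁ : ℂ)).im = _
  rw [show ((D₁:ℂ)) = (((D₁:ℝ)):ℂ) by push_cast; rfl, Complex.div_ofReal_im, h2]
  ring

lemma tendsto_mk_linear {G e D₁ : ℤ} (hG : 0 < G) (hD : 0 < D₁) :
    Filter.Tendsto
      (fun z : ℍ => UpperHalfPlane.mk (((G : ℂ) * z + e) / (D₁ : ℂ)) (im_linear_div hG hD z))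
      atImInfty atImInfty := by
  rw [atImInfty, Filter.tendsto_comap_iff]
  have h : (UpperHalfPlane.im ∘ fun z : ℍ =>
      UpperHalfPlane.mk (((G : ℂ) * z + e) / (D₁ : ℂ)) (im_linear_div hG hD z))
      = fun z : ℍ => ((G : ℝ) / (D₁ : ℝ)) * z.im := by
    funext z; exact im_mk_linear hG hD z
  rw [h]
  have hpos : 0 < (G : ℝ) / (D₁ : ℝ) :=
    div_pos (by exact_mod_cast hG) (by exact_mod_cast hD)
  exact (Filter.tendsto_comap (f := UpperHalfPlane.im)).const_mul_atTop hpos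

lemma isBoundedAtImInfty_comp {g : ℍ → ℂ} (hg : IsBoundedAtImInfty g) {W : ℍ → ℍ}
    (hW : Filter.Tendsto W atImInfty atImInfty) : IsBoundedAtImInfty (fun z => g (W z)) :=
  hg.comp_tendsto hW

lemma isBoundedAtImInfty_const_mul {g : ℍ → ℂ} (hg : IsBoundedAtImInfty g) (c : ℂ) :
    IsBoundedAtImInfty (fun z => c * g z) := by
  exact hg.const_mul_left c

lemma bounded_aux (k : ℤ) (f : ℍ → ℂ)
    (hbd : ∀ δ : SL(2,ℤ), IsBoundedAtImInfty (f ∣[k] δ))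
    (A B C D : ℤ) (P : ℕ) (hP : 0 < P) (hdet : A * D - B * C = P)
    (g : ℍ → ℂ)
    (hg : ∀ z : ℍ, ∃ w : ℍ, (w : ℂ) = ((A:ℂ) * z + B) / ((C:ℂ) * z + D)
        ∧ g z = f w * ((C:ℂ) * z + D) ^ (-k)) :
    IsBoundedAtImInfty g := by
  have hG0 : 0 < (Int.gcd A C : ℤ) := by
    rcases Nat.eq_zero_or_pos (Int.gcd A C) with h | h
    · obtain ⟨hA0, hC0⟩ := Int.gcd_eq_zero_iff.mp h
      rw [hA0, hC0] at hdet; simp at hdet; omega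
    · exact_mod_cast h
  obtain ⟨A₁, hA1⟩ : (Int.gcd A C : ℤ) ∣ A := Int.gcd_dvd_left A C
  obtain ⟨C₁, hC1⟩ : (Int.gcd A C : ℤ) ∣ C := Int.gcd_dvd_right A C
  set G : ℤ := (Int.gcd A C : ℤ) with hGdef
  set u : ℤ := Int.gcdA A C with hu
  set v : ℤ := Int.gcdB A C with hv
  have hbez0 : G = A * u + C * v := Int.gcd_eq_gcd_ab A C
  have hbez : A₁ * u + C₁ * v = 1 := by
    have h2 : G * (A₁ * u + C₁ * v) = G * 1 := by
      linear_combination (-1 : ℤ) * hbez0 + (-u) * hA1 + (-v) * hC1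
    exact mul_left_cancel₀ (ne_of_gt hG0) h2
  set D₁ : ℤ := A₁ * D - B * C₁ with hD₁def
  have hGD : G * D₁ = (P : ℤ) := by
    linear_combination hdet + (-D) * hA1 + B * hC1
  have hD₁ : 0 < D₁ := by nlinarith [hG0, hP, hGD]
  set e : ℤ := u * B + v * D with he
  have hdetδ : A₁ * u - (-v) * C₁ = 1 := by linarith
  set δ : SL(2, ℤ) := mkSL A₁ (-v) C₁ u hdetδ with hδ
  have hD₁c : (D₁ : ℂ) ≠ 0 := by exact_mod_cast ne_of_gt hD₁
  -- integer coefficient identities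
  have i1 : C₁ * G = C := by linear_combination (-1 : ℤ) * hC1
  have i2 : C₁ * e + u * D₁ = D := by rw [he, hD₁def]; linear_combination D * hbez
  have i3 : A₁ * G = A := by linear_combination (-1 : ℤ) * hA1
  have i4 : A₁ * e - v * D₁ = B := by rw [he, hD₁def]; linear_combination B * hbez
  have key : ∀ z : ℍ, g z = (D₁:ℂ)^(-k) *
      ((f ∣[k] δ) (UpperHalfPlane.mk (((G : ℂ) * z + e) / (D₁ : ℂ)) (im_linear_div hG0 hD₁ z))) := by
    intro z
    obtain ⟨w, hw, hgz⟩ := hg z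
    set Wz : ℍ := UpperHalfPlane.mk (((G : ℂ) * z + e) / (D₁ : ℂ)) (im_linear_div hG0 hD₁ z) with hWz
    have hWcoe : (Wz : ℂ) = ((G : ℂ) * z + e) / (D₁ : ℂ) := rfl
    have i1c : (C₁ : ℂ) * G = C := by exact_mod_cast congrArg (Int.cast : ℤ → ℂ) i1
    have i2c : (C₁ : ℂ) * e + u * D₁ = D := by exact_mod_cast congrArg (Int.cast : ℤ → ℂ) i2
    have i3c : (A₁ : ℂ) * G = A := by exact_mod_cast congrArg (Int.cast : ℤ → ℂ) i3
    have i4c : (A₁ : ℂ) * e - v * D₁ = B := by exact_mod_cast congrArg (Int.cast : ℤ → ℂ) i4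
    have hden : UpperHalfPlane.denom δ Wz = ((C:ℂ) * z + D) / D₁ := by
      rw [denom_eq, hδ]
      simp only [mkSL_10, mkSL_11]
      rw [hWcoe]
      have hstep : (C₁:ℂ) * ((((G : ℂ) * z + e)) / (D₁:ℂ)) + (u:ℂ)
          = ((C₁:ℂ) * (((G : ℂ) * z + e)) + (u:ℂ) * (D₁:ℂ)) / (D₁:ℂ) := by field_simp
      rw [hstep]
      congr 1
      linear_combination (z : ℂ) * i1c + i2c
    have hnum : ((δ 0 0 : ℤ) : ℂ) * Wz + ((δ 0 1 : ℤ) : ℂ) = ((A:ℂ) * z + B) / D₁ := by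
      rw [hδ]
      simp only [mkSL_00, mkSL_01]
      rw [hWcoe]
      push_cast
      have hstep : (A₁:ℂ) * ((((G : ℂ) * z + e)) / (D₁:ℂ)) + (-(v:ℂ))
          = ((A₁:ℂ) * (((G : ℂ) * z + e)) + (-(v:ℂ)) * (D₁:ℂ)) / (D₁:ℂ) := by field_simp
      rw [hstep]
      congr 1
      linear_combination (z : ℂ) * i3c + i4c
    have hCD : ((C:ℂ) * z + D) ≠ 0 := by
      intro h0
      have : UpperHalfPlane.denom δ Wz = 0 := by rw [hden, h0, zero_div]
      exact UpperHalfPlane.denom_ne_zero δ Wz this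
    have hwδ : w = δ • Wz := by
      apply UpperHalfPlane.ext
      rw [coe_smul_eq, hw]
      have hden' : ((δ 1 0 : ℤ) : ℂ) * Wz + ((δ 1 1 : ℤ) : ℂ) = ((C:ℂ) * z + D) / D₁ := by
        rw [← hden, denom_eq]
      rw [hnum, hden', div_div_div_cancel_right₀]
      exact hD₁c
    have hslash := SL_slash_eval k f δ Wz
    have hdne : UpperHalfPlane.denom δ Wz ≠ 0 := UpperHalfPlane.denom_ne_zero δ Wz
    have hfw : f w = (f ∣[k] δ) Wz * (UpperHalfPlane.denom δ Wz) ^ k := by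
      rw [hslash, hwδ]
      rw [mul_assoc, zpow_neg, inv_mul_cancel₀ (zpow_ne_zero _ hdne), mul_one]
    rw [hgz, hfw, hden]
    have hXk : ((C:ℂ) * z + D) ^ k ≠ 0 := zpow_ne_zero _ hCD
    rw [div_zpow, zpow_neg, zpow_neg]
    field_simp
  rw [funext key]
  exact isBoundedAtImInfty_const_mul
    (isBoundedAtImInfty_comp (hbd δ) (tendsto_mk_linear hG0 hD₁)) _

lemma mdiff_term {f : ℍ → ℂ} (hf : MDifferentiable 𝓘(ℂ) 𝓘(ℂ) f) {p : ℕ} (hp : 0 < p) (m : ℕ) :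
    MDifferentiable 𝓘(ℂ) 𝓘(ℂ)
      (fun z : ℍ => f (UpperHalfPlane.mk (((z : ℂ) + (m : ℂ)) / (p : ℂ)) (aux_im_pos hp m z))) := by
  have heq : (fun z : ℍ => f (UpperHalfPlane.mk (((z : ℂ) + (m : ℂ)) / (p : ℂ)) (aux_im_pos hp m z)))
      = fun z : ℍ => f (ofComplex (((z : ℂ) + (m : ℂ)) / (p : ℂ))) := by
    funext z
    congr 1
    rw [ofComplex_apply_of_im_pos (aux_im_pos hp m z)]
  rw [heq]
  intro τ
  have h1 : MDifferentiableAt 𝓘(ℂ) 𝓘(ℂ) (fun z : ℍ => (((z : ℂ) + (m : ℂ)) / (p : ℂ))) τ := by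
    have hg : MDifferentiableAt 𝓘(ℂ) 𝓘(ℂ) (fun w : ℂ => (w + (m : ℂ)) / (p : ℂ)) (τ : ℂ) :=
      (((differentiable_id.add_const (m : ℂ)).div_const (p : ℂ)) (τ : ℂ)).mdifferentiableAt
    exact hg.comp τ (mdifferentiable_coe τ)
  exact (hf _).comp τ ((mdifferentiableAt_ofComplex (aux_im_pos hp m τ)).comp τ h1)

lemma mdiff_sum {p : ℕ} (F : ℕ → ℍ → ℂ) (hF : ∀ m, MDifferentiable 𝓘(ℂ) 𝓘(ℂ) (F m)) (c : ℂ) :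
    MDifferentiable 𝓘(ℂ) 𝓘(ℂ) (fun z : ℍ => c * ∑ m ∈ Finset.range p, F m z) := by
  have hsum : MDifferentiable 𝓘(ℂ) 𝓘(ℂ) (fun z : ℍ => ∑ m ∈ Finset.range p, F m z) := by
    induction (Finset.range p) using Finset.induction_on with
    | empty => simpa using mdifferentiable_const
    | insert _ _ hx ih =>
      simp only [Finset.sum_insert hx]
      exact (hF _).add ih
  exact hsum.const_smul c

lemma isBoundedAtImInfty_sum {s : Finset ℕ} {F : ℕ → ℍ → ℂ}
    (h : ∀ m ∈ s, IsBoundedAtImInfty (F m)) :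
    IsBoundedAtImInfty (fun z => ∑ m ∈ s, F m z) := by
  induction s using Finset.induction_on with
  | empty => simp only [Finset.sum_empty]; exact zero_form_isBoundedAtImInfty
  | @insert x s hx ih =>
    simp only [Finset.sum_insert hx]
    exact (h x (Finset.mem_insert_self x s)).add
      (ih (fun m hm => h m (Finset.mem_insert_of_mem hm)))

lemma aux_im_pos_int {p : ℕ} (hp : 0 < p) (j : ℤ) (z : UpperHalfPlane) :
    0 < ((((z : ℂ) + (j : ℂ)) / (p : ℂ))).im := by
  have hp' : (0 : ℝ) < (p : ℝ) := by exact_mod_cast hp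
  have h1 : (((z : ℂ) + (j : ℂ)) / (p : ℂ)).im = ((z : ℂ) + (j : ℂ)).im / (p : ℝ) := by
    rw [show ((p : ℂ)) = (((p : ℝ) : ℂ)) by push_cast; rfl, Complex.div_ofReal_im]
  rw [h1, show ((z : ℂ) + (j : ℂ)).im = (z : ℂ).im by simp]
  exact div_pos z.2 hp'

/-- If `f ∈ M_k(Γ₀(pʳN₀), χ)` with `r ≥ 2`, `gcd(p, N₀) = 1`, and `χ` a character mod
`p^(r-1)N₀`, then `f|U(p) = Σ a_{pn} qⁿ` lies in `M_k(Γ₀(p^(r-1)N₀), χ)`: the operator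
`U(p)`, given by `(f|U(p))(z) = (1/p) Σ_{m=0}^{p-1} f((z+m)/p)`, lowers the level from
`pʳN₀` to `p^(r-1)N₀`. -/
theorem U_apply_lowers_level
    (k : ℤ) (p r N₀ : ℕ) (hp : p.Prime) (hr : 2 ≤ r) (hpN₀ : Nat.gcd p N₀ = 1)
    (χ : DirichletCharacter ℂ (p ^ (r - 1) * N₀)) (f : ℍ → ℂ)
    (hf : IsModularFormWithChar k (p ^ r * N₀)
      (DirichletCharacter.changeLevel
        (mul_dvd_mul_right (pow_dvd_pow p (Nat.sub_le r 1)) N₀) χ) f) :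
    IsModularFormWithChar k (p ^ (r - 1) * N₀) χ
      (fun z : ℍ => (p : ℂ)⁻¹ *
        ∑ m ∈ Finset.range p, f (UpperHalfPlane.mk (((z : ℂ) + (m : ℂ)) / (p : ℂ))
          (aux_im_pos hp.pos m z))) := by
  obtain ⟨hdiff, hslash, hbdd⟩ := hf
  have hp0 : 0 < p := hp.pos
  haveI : NeZero p := ⟨hp.ne_zero⟩
  haveI := Fact.mk hp
  have hN₀ : 0 < N₀ := by
    rcases Nat.eq_zero_or_pos N₀ with h | h
    · rw [h] at hpN₀; simp at hpN₀; have := hp.two_le; omega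
    · exact h
  have hpcne : (p : ℂ) ≠ 0 := by exact_mod_cast hp0.ne'
  have hPN : p ^ r * N₀ = p * (p ^ (r - 1) * N₀) := by
    have h1 : p ^ r = p * p ^ (r - 1) := by
      conv_lhs => rw [show r = (r - 1) + 1 by omega]
      rw [pow_succ']
    rw [h1, mul_assoc]
  have hpN : p ∣ p ^ (r - 1) * N₀ :=
    dvd_mul_of_dvd_left (dvd_pow_self p (by omega)) N₀
  haveI : NeZero (p ^ r * N₀) := ⟨by positivity⟩
  refine ⟨mdiff_sum (fun m z => f (UpperHalfPlane.mk (((z : ℂ) + (m : ℂ)) / (p : ℂ))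
      (aux_im_pos hp.pos m z))) (fun m => mdiff_term hdiff hp.pos m) _, ?_, ?_⟩
  · -- slash equivariance
    intro γ hγ
    set a : ℤ := γ 0 0 with ha
    set b : ℤ := γ 0 1 with hb
    set c : ℤ := γ 1 0 with hcdef
    set d : ℤ := γ 1 1 with hd
    have hdet : a * d - b * c = 1 := by
      have h6 := γ.property
      rw [Matrix.det_fin_two] at h6
      linarith [h6]
    have hc : ((p ^ (r - 1) * N₀ : ℕ) : ℤ) ∣ c :=
      (ZMod.intCast_zmod_eq_zero_iff_dvd _ _).mp (Gamma0_mem.mp hγ)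
    have hpc : (p : ℤ) ∣ c := dvd_trans (by exact_mod_cast Int.natCast_dvd_natCast.mpr hpN) hc
    have hc0 : ((c : ℤ) : ZMod p) = 0 := (ZMod.intCast_zmod_eq_zero_iff_dvd _ _).mpr hpc
    have had : ((a : ℤ) : ZMod p) * ((d : ℤ) : ZMod p) = 1 := by
      have h2 := congrArg (Int.cast : ℤ → ZMod p) hdet
      push_cast at h2
      rw [hc0] at h2
      simpa using h2
    have hd0 : ((d : ℤ) : ZMod p) ≠ 0 := by
      intro h
      rw [h, mul_zero] at had
      exact zero_ne_one had
    funext z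
    rw [SL_slash_eval]
    set Dz : ℂ := UpperHalfPlane.denom γ z with hDz
    have hDzne : Dz ≠ 0 := UpperHalfPlane.denom_ne_zero γ z
    have hDzeq : Dz = (c : ℂ) * z + d := denom_eq γ z
    have hcd : (c : ℂ) * z + (d : ℂ) ≠ 0 := hDzeq ▸ hDzne
    set G : ZMod p → ℂ := fun x => f (UpperHalfPlane.mk (((z : ℂ) + (x.val : ℂ)) / (p : ℂ))
      (aux_im_pos hp.pos x.val z)) with hG
    have claimA : ∀ (j : ℤ) (hj : 0 < (((z : ℂ) + (j : ℂ)) / (p : ℂ)).im),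
        f (UpperHalfPlane.mk (((z : ℂ) + (j : ℂ)) / (p : ℂ)) hj) = G ((j : ZMod p)) := by
      intro j hj
      have hval : (((j : ZMod p)).val : ℤ) = j % p := ZMod.val_intCast j
      set w : ℍ := UpperHalfPlane.mk (((z : ℂ) + ((((j : ZMod p)).val : ℕ) : ℂ)) / (p : ℂ))
        (aux_im_pos hp.pos _ z) with hw
      have hjdecomp : (j : ℂ) = (((j % p : ℤ)) : ℂ) + (p : ℂ) * (((j / p : ℤ)) : ℂ) := by
        have h3 : j = j % (p : ℤ) + (p : ℤ) * (j / (p : ℤ)) := (Int.emod_add_mul_ediv j p).symm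
        have h4 := congrArg (Int.cast : ℤ → ℂ) h3
        push_cast at h4
        exact h4
      have hcoe : ((z : ℂ) + (j : ℂ)) / (p : ℂ) = (w : ℂ) + (((j / p : ℤ)) : ℂ) := by
        have hwcoe : (w : ℂ) = ((z : ℂ) + ((((j : ZMod p)).val : ℕ) : ℂ)) / (p : ℂ) := rfl
        have hvalc : ((((j : ZMod p)).val : ℕ) : ℂ) = (((j % p : ℤ)) : ℂ) := by
          exact_mod_cast congrArg (Int.cast : ℤ → ℂ) hval
        rw [hwcoe, hvalc, hjdecomp]
        field_simp
        ring
      have hper := periodic_of_slash hslash w (j / p) (hcoe ▸ hj)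
      calc f (UpperHalfPlane.mk (((z : ℂ) + (j : ℂ)) / (p : ℂ)) hj)
          = f (UpperHalfPlane.mk ((w : ℂ) + (((j / p : ℤ)) : ℂ)) (hcoe ▸ hj)) := by
            congr 1
            exact UpperHalfPlane.ext hcoe
        _ = f w := hper
        _ = G ((j : ZMod p)) := rfl
    have hterm : ∀ m : ℕ,
        f (UpperHalfPlane.mk (((↑(γ • z) : ℂ) + (m : ℂ)) / (p : ℂ)) (aux_im_pos hp.pos m (γ • z)))
          = (χ (((d : ℤ) : ZMod (p ^ (r - 1) * N₀))) * Dz ^ k)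
              * G (((d * b + d * d * m : ℤ) : ZMod p)) := by
      intro m
      set t : ℤ := d * b + d * d * (m : ℤ) with ht
      set m' : ℤ := t % p with hm'def
      have hm'cast : ((m' : ZMod p)) = ((t : ZMod p)) :=
        (ZMod.intCast_eq_intCast_iff' _ _ _).mpr (Int.emod_emod_of_dvd t dvd_rfl)
      have hdvd : (p : ℤ) ∣ (b + m * d - m' * (a + m * c)) := by
        apply (ZMod.intCast_zmod_eq_zero_iff_dvd _ p).mp
        push_cast
        have hm'c : ((m' : ℤ) : ZMod p) = ((d : ℤ) : ZMod p) * ((b : ℤ) : ZMod p)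
            + ((d : ℤ) : ZMod p) * ((d : ℤ) : ZMod p) * ((m : ℕ) : ZMod p) := by
          rw [hm'cast, ht]; push_cast; ring
        rw [hm'c, hc0]
        linear_combination (-(((b : ℤ) : ZMod p) + ((m : ℕ) : ZMod p) * ((d : ℤ) : ZMod p))) * had
      set e' : ℤ := (b + m * d - m' * (a + m * c)) / p with he'
      have he'p : (p : ℤ) * e' = b + m * d - m' * (a + m * c) := Int.mul_ediv_cancel' hdvd
      have hdet2 : (a + m * c) * (d - m' * c) - e' * (p * c) = 1 := by
        linear_combination (-(c : ℤ)) * he'p + hdet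
      set γm : SL(2, ℤ) := mkSL (a + m * c) e' (p * c) (d - m' * c) hdet2 with hγm
      have hγmΓ : γm ∈ Gamma0 (p ^ r * N₀) := by
        rw [Gamma0_mem]
        have h7 : ((γm 1 0 : ℤ) : ZMod (p ^ r * N₀)) = (((p * c : ℤ)) : ZMod (p ^ r * N₀)) := by
          rw [hγm]; norm_cast
        rw [h7]
        apply (ZMod.intCast_zmod_eq_zero_iff_dvd _ _).mpr
        rw [hPN]
        push_cast
        have hc9 : ((p : ℤ)) ^ (r - 1) * (N₀ : ℤ) ∣ c := by exact_mod_cast hc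
        exact mul_dvd_mul_left (p : ℤ) hc9
      set w' : ℍ := UpperHalfPlane.mk (((z : ℂ) + (m' : ℂ)) / (p : ℂ))
        (aux_im_pos_int hp.pos m' z) with hw'
      have he'c : (p : ℂ) * (e' : ℂ) = (b : ℂ) + m * d - m' * ((a : ℂ) + m * c) := by
        exact_mod_cast congrArg (Int.cast : ℤ → ℂ) he'p
      have hd1 : ((p : ℂ) * (c : ℂ)) * (((z : ℂ) + (m' : ℂ)) / (p : ℂ)) + ((d : ℂ) - (m' : ℂ) * c)
          = (c : ℂ) * z + d := by
        field_simp
        ring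
      have hn1 : ((a : ℂ) + (m : ℂ) * c) * (((z : ℂ) + (m' : ℂ)) / (p : ℂ)) + (e' : ℂ)
          = (((a : ℂ) + m * c) * z + ((b : ℂ) + m * d)) / (p : ℂ) := by
        have hstep : ((a : ℂ) + (m : ℂ) * c) * (((z : ℂ) + (m' : ℂ)) / (p : ℂ)) + (e' : ℂ)
            = (((a : ℂ) + (m : ℂ) * c) * ((z : ℂ) + (m' : ℂ)) + (e' : ℂ) * (p : ℂ)) / (p : ℂ) := by
          field_simp
        rw [hstep]
        congr 1
        linear_combination he'c
      have hsmulcoe : (↑(γ • z) : ℂ) = ((a : ℂ) * z + b) / ((c : ℂ) * z + d) := coe_smul_eq γ z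
      have h1 : γm • w' = UpperHalfPlane.mk (((↑(γ • z) : ℂ) + (m : ℂ)) / (p : ℂ))
          (aux_im_pos hp.pos m (γ • z)) := by
        apply UpperHalfPlane.ext
        rw [coe_smul_eq]
        show (((γm 0 0 : ℤ) : ℂ) * (w' : ℂ) + ((γm 0 1 : ℤ) : ℂ))
            / (((γm 1 0 : ℤ) : ℂ) * (w' : ℂ) + ((γm 1 1 : ℤ) : ℂ))
            = ((↑(γ • z) : ℂ) + (m : ℂ)) / (p : ℂ)
        rw [hγm]
        simp only [mkSL_00, mkSL_01, mkSL_10, mkSL_11]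
        push_cast
        have hw'coe : (w' : ℂ) = ((z : ℂ) + (m' : ℂ)) / (p : ℂ) := rfl
        rw [hw'coe, hn1, hd1, hsmulcoe]
        field_simp
        ring
      have h2' : UpperHalfPlane.denom γm w' = Dz := by
        rw [denom_eq, hγm]
        have hw'coe : (w' : ℂ) = ((z : ℂ) + (m' : ℂ)) / (p : ℂ) := rfl
        simp only [mkSL_10, mkSL_11]
        push_cast
        rw [hw'coe]
        rw [hDzeq, ← hd1]
      have htr := transform_of_slash hslash hγmΓ w'
      rw [h1, h2'] at htr
      have hγm11 : ((γm 1 1 : ℤ) : ZMod (p ^ r * N₀))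
          = (((d - m' * c : ℤ)) : ZMod (p ^ r * N₀)) := by
        rw [hγm]; norm_cast
      have hPdvd : ((p ^ r * N₀ : ℕ) : ℤ) ∣ (p * c : ℤ) := by
        rw [hPN]; push_cast
        have hc9 : ((p : ℤ)) ^ (r - 1) * (N₀ : ℤ) ∣ c := by exact_mod_cast hc
        exact mul_dvd_mul_left (p : ℤ) hc9
      have hunit : IsUnit (((d - m' * c : ℤ)) : ZMod (p ^ r * N₀)) := by
        apply IsUnit.of_mul_eq_one (((a + m * c : ℤ)) : ZMod (p ^ r * N₀))
        have hPc : (((p * c : ℤ)) : ZMod (p ^ r * N₀)) = 0 :=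
          (ZMod.intCast_zmod_eq_zero_iff_dvd _ _).mpr hPdvd
        have h4 := congrArg (Int.cast : ℤ → ZMod (p ^ r * N₀)) hdet2
        push_cast at h4 hPc ⊢
        linear_combination h4 + ((e' : ℤ) : ZMod (p ^ r * N₀)) * hPc
      have hχval : (DirichletCharacter.changeLevel
            (mul_dvd_mul_right (pow_dvd_pow p (Nat.sub_le r 1)) N₀) χ)
            ((γm 1 1 : ℤ) : ZMod (p ^ r * N₀))
          = χ (((d : ℤ) : ZMod (p ^ (r - 1) * N₀))) := by
        rw [hγm11, changeLevel_intCast _ χ _ hunit]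
        congr 1
        have hcN : ((c : ℤ) : ZMod (p ^ (r - 1) * N₀)) = 0 :=
          (ZMod.intCast_zmod_eq_zero_iff_dvd _ _).mpr hc
        push_cast
        rw [hcN]
        ring
      rw [hχval] at htr
      have hfw' : f w' = G ((t : ZMod p)) := by
        rw [← hm'cast]
        exact claimA m' (aux_im_pos_int hp.pos m' z)
      rw [htr, hfw']
      ring
    have hsum1 : ∑ m ∈ Finset.range p,
          f (UpperHalfPlane.mk (((↑(γ • z) : ℂ) + (m : ℂ)) / (p : ℂ)) (aux_im_pos hp.pos m (γ • z)))
        = (χ (((d : ℤ) : ZMod (p ^ (r - 1) * N₀))) * Dz ^ k)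
            * ∑ m ∈ Finset.range p, G (((d * b + d * d * m : ℤ) : ZMod p)) := by
      rw [Finset.mul_sum]
      exact Finset.sum_congr rfl (fun m _ => hterm m)
    have hsum2 : ∑ m ∈ Finset.range p, G (((d * b + d * d * m : ℤ) : ZMod p))
        = ∑ m ∈ Finset.range p, G ((m : ZMod p)) := by
      have hcongr : ∀ m ∈ Finset.range p, G (((d * b + d * d * m : ℤ) : ZMod p))
          = (fun x : ZMod p => G (((d : ℤ) : ZMod p) * ((b : ℤ) : ZMod p)
              + ((d : ℤ) : ZMod p) * ((d : ℤ) : ZMod p) * x)) ((m : ZMod p)) := by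
        intro m _
        show G _ = G _
        congr 1
        push_cast
        ring
      calc ∑ m ∈ Finset.range p, G (((d * b + d * d * m : ℤ) : ZMod p))
          = ∑ m ∈ Finset.range p, (fun x : ZMod p => G (((d : ℤ) : ZMod p) * ((b : ℤ) : ZMod p)
              + ((d : ℤ) : ZMod p) * ((d : ℤ) : ZMod p) * x)) ((m : ZMod p)) :=
            Finset.sum_congr rfl hcongr
        _ = ∑ x : ZMod p, (fun x : ZMod p => G (((d : ℤ) : ZMod p) * ((b : ℤ) : ZMod p)
              + ((d : ℤ) : ZMod p) * ((d : ℤ) : ZMod p) * x)) x :=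
            sum_range_eq_sum_zmod p (fun x : ZMod p => G (((d : ℤ) : ZMod p) * ((b : ℤ) : ZMod p)
              + ((d : ℤ) : ZMod p) * ((d : ℤ) : ZMod p) * x))
        _ = ∑ x : ZMod p, G x :=
            sum_affine hp _ _ (mul_ne_zero hd0 hd0) G
        _ = ∑ m ∈ Finset.range p, G ((m : ZMod p)) := (sum_range_eq_sum_zmod p G).symm
    have hsum3 : ∀ m ∈ Finset.range p, G ((m : ZMod p))
        = f (UpperHalfPlane.mk (((z : ℂ) + (m : ℂ)) / (p : ℂ)) (aux_im_pos hp.pos m z)) := by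
      intro m _
      have hpos : 0 < (((z : ℂ) + (((m : ℤ)) : ℂ)) / (p : ℂ)).im := by
        push_cast
        exact aux_im_pos hp.pos m z
      have h5 := claimA (m : ℤ) hpos
      have hGcast : G (((m : ℤ) : ZMod p)) = G ((m : ZMod p)) := by norm_cast
      rw [← hGcast, ← h5]
      congr 1
    show (p : ℂ)⁻¹ * (∑ m ∈ Finset.range p,
        f (UpperHalfPlane.mk (((↑(γ • z) : ℂ) + (m : ℂ)) / (p : ℂ)) (aux_im_pos hp.pos m (γ • z))))
          * Dz ^ (-k) = _
    rw [hsum1, hsum2, Finset.sum_congr rfl hsum3]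
    simp only [Pi.smul_apply, smul_eq_mul]
    have hDzk : Dz ^ k ≠ 0 := zpow_ne_zero _ hDzne
    rw [zpow_neg]
    field_simp
  · -- boundedness at cusps
    intro γ
    set a : ℤ := γ 0 0 with ha
    set b : ℤ := γ 0 1 with hb
    set c : ℤ := γ 1 0 with hcdef
    set d : ℤ := γ 1 1 with hd
    have hdet : a * d - b * c = 1 := by
      have h6 := γ.property
      rw [Matrix.det_fin_two] at h6
      linarith [h6]
    have heval : (fun z : ℍ => (p : ℂ)⁻¹ *
          ∑ m ∈ Finset.range p, f (UpperHalfPlane.mk (((z : ℂ) + (m : ℂ)) / (p : ℂ))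
            (aux_im_pos hp.pos m z))) ∣[k] γ
        = fun z : ℍ => (p : ℂ)⁻¹ * ∑ m ∈ Finset.range p,
            (f (UpperHalfPlane.mk (((↑(γ • z) : ℂ) + (m : ℂ)) / (p : ℂ))
              (aux_im_pos hp.pos m (γ • z))) * (UpperHalfPlane.denom γ z) ^ (-k)) := by
      funext z
      rw [SL_slash_eval]
      show ((p : ℂ)⁻¹ * _) * _ = _
      rw [mul_assoc, Finset.sum_mul]
    rw [heval]
    apply isBoundedAtImInfty_const_mul
    apply isBoundedAtImInfty_sum
    intro m _
    have hdetm : (a + m * c) * (p * d) - (b + m * d) * (p * c) = ((p : ℕ) : ℤ) := by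
      linear_combination (p : ℤ) * hdet
    have hbase := bounded_aux k f hbdd (a + m * c) (b + m * d) (p * c) (p * d) p hp0 hdetm
      (fun z : ℍ => f (UpperHalfPlane.mk (((↑(γ • z) : ℂ) + (m : ℂ)) / (p : ℂ))
          (aux_im_pos hp.pos m (γ • z)))
        * (((p * c : ℤ) : ℂ) * z + ((p * d : ℤ) : ℂ)) ^ (-k)) ?_
    · have hrw : (fun z : ℍ => f (UpperHalfPlane.mk (((↑(γ • z) : ℂ) + (m : ℂ)) / (p : ℂ))
            (aux_im_pos hp.pos m (γ • z))) * (UpperHalfPlane.denom γ z) ^ (-k))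
          = fun z : ℍ => (p : ℂ) ^ k *
            (f (UpperHalfPlane.mk (((↑(γ • z) : ℂ) + (m : ℂ)) / (p : ℂ))
              (aux_im_pos hp.pos m (γ • z)))
            * (((p * c : ℤ) : ℂ) * z + ((p * d : ℤ) : ℂ)) ^ (-k)) := by
        funext z
        have hcd : (c : ℂ) * z + (d : ℂ) ≠ 0 := (denom_eq γ z) ▸ (UpperHalfPlane.denom_ne_zero γ z)
        have hsplit : (((p * c : ℤ) : ℂ) * z + ((p * d : ℤ) : ℂ))
            = (p : ℂ) * ((c : ℂ) * z + d) := by push_cast; ring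
        rw [hsplit, mul_zpow, zpow_neg (p : ℂ), denom_eq γ z]
        have hpk : (p : ℂ) ^ k ≠ 0 := zpow_ne_zero _ hpcne
        field_simp
        simp only [hcdef, hd]; ring
      rw [hrw]
      exact isBoundedAtImInfty_const_mul hbase _
    · intro z
      refine ⟨UpperHalfPlane.mk (((↑(γ • z) : ℂ) + (m : ℂ)) / (p : ℂ))
        (aux_im_pos hp.pos m (γ • z)), ?_, rfl⟩
      have hcd : (c : ℂ) * z + (d : ℂ) ≠ 0 := (denom_eq γ z) ▸ (UpperHalfPlane.denom_ne_zero γ z)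
      show ((↑(γ • z) : ℂ) + (m : ℂ)) / (p : ℂ) = _
      rw [coe_smul_eq γ z]
      push_cast
      rw [div_add' _ _ _ hcd, div_div]
      rw [div_eq_div_iff (by exact mul_ne_zero hcd hpcne) (by
        intro h0
        apply mul_ne_zero hpcne hcd
        rw [← h0]; ring)]
      ring
end
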